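/- arXiv:1604.06098 — 8 statements merged into one kernel-verified Lean document; each statement's English description precedes it below -/
import Mathlib

section
/- Let D ≥ 2 be a square-free integer. Suppose some positive integer d₀ satisfies that the square-free part of (d₀-1)² - 4 equals D. Then there exist infinitely many positive integers d such that the square-free part of (d-1)² - 4 = (d+1)(d-3) equals D. -/
private def pellSeq (D x y : ℤ) : ℕ → ℤ × ℤ
  | 0 => (x, y)
  | n + 1 =>
    let p := pellSeq D x y n
    (D * p.2 ^ 2 + 2, p.1 * p.2)

private lemma pell_inv (D x y : ℤ) (hD : 2 ≤ D) (hx : 3 ≤ x) (hy : 0 < y)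
    (h : x ^ 2 - D * y ^ 2 = 4) (n : ℕ) :
    3 ≤ (pellSeq D x y n).1 ∧ 0 < (pellSeq D x y n).2 ∧
      (pellSeq D x y n).1 ^ 2 - D * (pellSeq D x y n).2 ^ 2 = 4 := by
  induction n with
  | zero => exact ⟨hx, hy, h⟩
  | succ n ih =>
    obtain ⟨h1, h2, h3⟩ := ih
    refine ⟨?_, ?_, ?_⟩
    · show 3 ≤ D * (pellSeq D x y n).2 ^ 2 + 2
      nlinarith
    · show 0 < (pellSeq D x y n).1 * (pellSeq D x y n).2
      positivity
    · show (D * (pellSeq D x y n).2 ^ 2 + 2) ^ 2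
          - D * ((pellSeq D x y n).1 * (pellSeq D x y n).2) ^ 2 = 4
      nlinarith

private lemma pell_mono (D x y : ℤ) (hD : 2 ≤ D) (hx : 3 ≤ x) (hy : 0 < y)
    (h : x ^ 2 - D * y ^ 2 = 4) :
    StrictMono (fun n => (pellSeq D x y n).1) := by
  apply strictMono_nat_of_lt_succ
  intro n
  obtain ⟨h1, h2, h3⟩ := pell_inv D x y hD hx hy h n
  show (pellSeq D x y n).1 < D * (pellSeq D x y n).2 ^ 2 + 2
  nlinarith

/-- If some positive integer `d₀` has squarefree part of `(d₀-1)^2-4`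
equal to `D` (with `D ≥ 2` squarefree), then infinitely many positive integers `d`
have squarefree part of `(d-1)^2-4` equal to `D`. -/
theorem stmt_1 (D : ℤ) (hD2 : 2 ≤ D) (hDsf : Squarefree D)
    (h0 : ∃ d₀ : ℤ, 0 < d₀ ∧ ∃ k : ℤ, 0 < k ∧ (d₀ - 1) ^ 2 - 4 = D * k ^ 2) :
    {d : ℤ | 0 < d ∧ ∃ k : ℤ, 0 < k ∧ (d - 1) ^ 2 - 4 = D * k ^ 2}.Infinite := by
  obtain ⟨d₀, hd₀, k₀, hk₀, heq⟩ := h0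
  set x := d₀ - 1 with hxdef
  have hx0 : 0 ≤ x := by omega
  have hpell : x ^ 2 - D * k₀ ^ 2 = 4 := by linarith
  have hx : 3 ≤ x := by nlinarith
  apply Set.infinite_of_injective_forall_mem
    (f := fun n : ℕ => (pellSeq D x k₀ n).1 + 1)
  · intro a b hab
    simp only [add_left_inj] at hab
    exact (pell_mono D x k₀ hD2 hx hk₀ hpell).injective hab
  · intro n
    obtain ⟨h1, h2, h3⟩ := pell_inv D x k₀ hD2 hx hk₀ hpell n
    refine ⟨by omega, (pellSeq D x k₀ n).2, h2, by simp only [add_sub_cancel_right]; linarith⟩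
end

section
/- Define polynomials T*_n by T*_0(x) = 3, T*_1(x) = x, and T*_n(x) = x·T*_{n-1}(x) - x·T*_{n-2}(x) + T*_{n-3}(x) for n ≥ 3 (extended to T*_2(x) = x² - 2x via the recursion, i.e., T*_2(x) = x(x-2)). Then T*_n(x) = 1 + 2·T_n((x-1)/2), where T_n is the n-th Chebyshev polynomial of the first kind. -/
open Polynomial

/-- The shifted Chebyshev polynomials `T*ₙ`, defined by the integer recursion
`T*₀ = 3`, `T*₁ = X`, `T*₂ = X² - 2X`, `T*ₙ = X·T*ₙ₋₁ - X·T*ₙ₋₂ + T*ₙ₋₃`. -/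
noncomputable def Tstar : ℕ → Polynomial ℚ
  | 0 => 3
  | 1 => X
  | 2 => X ^ 2 - 2 * X
  | (n + 3) => X * Tstar (n + 2) - X * Tstar (n + 1) + Tstar n

lemma half_key : (2 : Polynomial ℚ) * Polynomial.C (1/2 : ℚ) = 1 := by
  rw [← map_ofNat (Polynomial.C (R := ℚ)) 2, ← Polynomial.C_mul]
  norm_num

lemma cheb_comp_step (n : ℤ) :
    (Polynomial.Chebyshev.T ℚ (n + 2)).comp (Polynomial.C (1/2 : ℚ) * (X - 1)) =
      (X - 1) * (Polynomial.Chebyshev.T ℚ (n + 1)).comp (Polynomial.C (1/2 : ℚ) * (X - 1))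
      - (Polynomial.Chebyshev.T ℚ n).comp (Polynomial.C (1/2 : ℚ) * (X - 1)) := by
  rw [Polynomial.Chebyshev.T_add_two]
  simp only [sub_comp, mul_comp, X_comp, ofNat_comp]
  linear_combination ((X - 1) * (Polynomial.Chebyshev.T ℚ (n + 1)).comp
    (Polynomial.C (1/2 : ℚ) * (X - 1))) * half_key

/-- `T*ₙ(x) = 1 + 2·Tₙ((x-1)/2)` where `Tₙ` is the Chebyshev
polynomial of the first kind. -/
theorem stmt_3 (n : ℕ) :
    Tstar n = 1 + 2 * (Polynomial.Chebyshev.T ℚ n).comp (Polynomial.C (1/2 : ℚ) * (X - 1)) := by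
  induction n using Nat.strong_induction_on with
  | _ n ih =>
    match n with
    | 0 => simp [Tstar, Polynomial.Chebyshev.T_zero]; ring
    | 1 =>
      simp only [Tstar, Nat.cast_one, Polynomial.Chebyshev.T_one, X_comp]
      linear_combination (1 - X) * half_key
    | 2 =>
      have e : ((2 : ℕ) : ℤ) = (0 : ℤ) + 2 := by norm_num
      rw [Tstar, e, cheb_comp_step]
      simp only [zero_add, Polynomial.Chebyshev.T_zero, Polynomial.Chebyshev.T_one,
        one_comp, X_comp]
      linear_combination (-(X - 1)^2) * half_key
    | (m + 3) =>
      have h0 := ih m (by omega)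
      have h1 := ih (m + 1) (by omega)
      have h2 := ih (m + 2) (by omega)
      have e3 : ((m + 3 : ℕ) : ℤ) = ((m + 1 : ℕ) : ℤ) + 2 := by push_cast; ring
      have e2 : ((m + 2 : ℕ) : ℤ) = ((m : ℕ) : ℤ) + 2 := by push_cast; ring
      have e2' : ((m + 1 : ℕ) : ℤ) + 1 = ((m + 2 : ℕ) : ℤ) := by push_cast; ring
      have e1 : ((m : ℕ) : ℤ) + 1 = ((m + 1 : ℕ) : ℤ) := by push_cast; ring
      rw [Tstar, h0, h1, h2, e3, cheb_comp_step, e2', e2, cheb_comp_step, e1]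
      ring
end

section
/- Let u > 1 be real with u + u⁻¹ ∈ ℤ and d_r = 1 + u^r + u^{-r}. If n ≡ 0 (mod 3) then d_r divides d_{nr} - 3; if n ≡ 1 or 2 (mod 3), then d_r divides d_{nr}. -/
/-- With `u > 1` real, `u + u⁻¹ ∈ ℤ`, and `d_r = 1 + uʳ + u⁻ʳ`
(integers `D r`): if `n ≡ 0 (mod 3)` then `d_r ∣ d_{nr} - 3`; if `n ≡ 1` or
`n ≡ 2 (mod 3)` then `d_r ∣ d_{nr}`. -/
theorem stmt_7 (u : ℝ) (hu : 1 < u)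
    (D : ℕ → ℤ) (hD : ∀ r : ℕ, (D r : ℝ) = 1 + u ^ r + u⁻¹ ^ r)
    (r n : ℕ) (hr : 1 ≤ r) (hn : 1 ≤ n) :
    (n % 3 = 0 → D r ∣ D (n * r) - 3) ∧
      (n % 3 = 1 ∨ n % 3 = 2 → D r ∣ D (n * r)) := by
  have hu0 : u ≠ 0 := by positivity
  have key : ∀ m : ℕ, D ((m + 2) * r) =
      (D r - 1) * (D ((m + 1) * r) - 1) - D (m * r) + 2 := by
    intro m
    have h : ((D ((m + 2) * r) : ℤ) : ℝ) =
        (((D r - 1) * (D ((m + 1) * r) - 1) - D (m * r) + 2 : ℤ) : ℝ) := by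
      push_cast
      rw [hD, hD, hD, hD]
      simp only [inv_pow]
      field_simp
      ring
    exact_mod_cast h
  have main : ∀ n : ℕ, (n % 3 = 0 → D r ∣ D (n * r) - 3) ∧
      (n % 3 ≠ 0 → D r ∣ D (n * r)) := by
    intro n
    induction n using Nat.strong_induction_on with
    | _ n ih =>
      rcases n with _ | _ | m
      · have h0 : D 0 = 3 := by
          have : (D 0 : ℝ) = 3 := by rw [hD]; norm_num
          exact_mod_cast this
        constructor
        · intro _; simp [h0]
        · intro h; omega
      · constructor
        · intro h; omega
        · intro _; simpa using dvd_refl (D r)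
      · have h1 := ih (m + 1) (by omega)
        have h0 := ih m (by omega)
        constructor
        · intro h
          obtain ⟨a, ha⟩ := h1.2 (by omega)
          obtain ⟨b, hb⟩ := h0.2 (by omega)
          refine ⟨a * D r - a - 1 - b, ?_⟩
          rw [key m, ha, hb]; ring
        · intro h
          rcases Nat.lt_or_ge ((m + 2) % 3) 2 with h' | h'
          · -- (m+2)%3 = 1
            obtain ⟨a, ha⟩ := h1.1 (by omega)
            obtain ⟨b, hb⟩ := h0.2 (by omega)
            refine ⟨D r * a - a + 2 - b, ?_⟩
            rw [key m]
            linear_combination (D r - 1) * ha - hb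
          · -- (m+2)%3 = 2
            obtain ⟨a, ha⟩ := h1.2 (by omega)
            obtain ⟨b, hb⟩ := h0.1 (by omega)
            refine ⟨D r * a - a - 1 - b, ?_⟩
            rw [key m]
            linear_combination (D r - 1) * ha - hb
  exact ⟨(main n).1, fun h => (main n).2 (by omega)⟩
end

section
/- Let u > 1 be real with u + u⁻¹ ∈ ℤ and d_r = 1 + u^r + u^{-r}. Let (i_j)_{j≥1} be a strictly increasing sequence of positive integers each coprime to 3 with i_1 | i_2 | i_3 | ⋯. Then d_{i_1} | d_{i_2} | d_{i_3} | ⋯, i.e., the sequence (d_{i_j}) forms a divisibility tower. -/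
/-- With `u > 1` real, `u + u⁻¹ ∈ ℤ` and `d_r = 1 + uʳ + u⁻ʳ`
(integers `D r`): if `(i_j)` is a strictly increasing sequence of positive
integers, each coprime to 3, with `i_j ∣ i_{j+1}`, then `D (i_j) ∣ D (i_{j+1})`
for every `j`, i.e. the `D (i_j)` form a divisibility tower. -/
theorem stmt_8 (u : ℝ) (hu : 1 < u)
    (D : ℕ → ℤ) (hD : ∀ r : ℕ, (D r : ℝ) = 1 + u ^ r + u⁻¹ ^ r)
    (i : ℕ → ℕ) (hpos : ∀ j, 1 ≤ i j) (hmono : StrictMono i)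
    (hcop : ∀ j, Nat.Coprime (i j) 3) (hdvd : ∀ j, i j ∣ i (j + 1)) :
    ∀ j, D (i j) ∣ D (i (j + 1)) := by
  have hu0 : u ≠ 0 := by positivity
  -- the recurrence D ((m+2)*r) = (D ((m+1)*r) - 1) * (D r - 1) - D (m*r) + 2
  have hrec : ∀ r m : ℕ, D ((m + 2) * r) = (D ((m + 1) * r) - 1) * (D r - 1) - D (m * r) + 2 := by
    intro r m
    have h : ((D ((m + 2) * r) : ℝ)) =
        ((D ((m + 1) * r) : ℝ) - 1) * ((D r : ℝ) - 1) - (D (m * r) : ℝ) + 2 := by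
      rw [hD, hD, hD, hD]
      have h1 : (m + 2) * r = m * r + r + r := by ring
      have h2 : (m + 1) * r = m * r + r := by ring
      rw [h1, h2]
      simp only [pow_add, inv_pow]
      have hp : u ^ (m * r) ≠ 0 := pow_ne_zero _ hu0
      have hq : u ^ r ≠ 0 := pow_ne_zero _ hu0
      field_simp
      ring
    exact_mod_cast h
  have main : ∀ r m : ℕ, D r ∣ D (m * r) - (if 3 ∣ m then 3 else 0) := by
    intro r m
    induction m using Nat.twoStepInduction with
    | zero =>
      have h0 : (D 0 : ℝ) = 3 := by rw [hD]; norm_num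
      have h0' : D 0 = 3 := by exact_mod_cast h0
      simp [h0']
    | one => simp
    | more m ih1 ih2 =>
      obtain ⟨a, ha⟩ := ih1
      obtain ⟨b, hb⟩ := ih2
      have he : (if 3 ∣ m then (3:ℤ) else 0) + (if 3 ∣ m + 1 then 3 else 0)
          + (if 3 ∣ m + 2 then 3 else 0) = 3 := by
        split_ifs <;> omega
      refine ⟨b * (D r - 1) - a + (if 3 ∣ m + 1 then 3 else 0) - 1, ?_⟩
      rw [hrec]
      linear_combination -he + (D r - 1) * hb - ha
  intro j
  obtain ⟨n, hn⟩ := hdvd j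
  have h3 : ¬ (3 ∣ n) := by
    intro h
    have hdiv : (3 : ℕ) ∣ i (j + 1) := hn ▸ Dvd.dvd.mul_left h _
    have := Nat.dvd_gcd hdiv (dvd_refl 3)
    rw [hcop (j + 1)] at this
    norm_num at this
  have := main (i j) n
  rw [if_neg h3, sub_zero] at this
  rw [hn, Nat.mul_comm]
  exact this
end

section
/- Let K be a real quadratic field with ring of integers ℤ_K, u ∈ ℤ_K^× a totally positive unit of norm 1 with u > 1 under one embedding, and d_r = 1 + u^r + u^{-r}. If d_r is even, then u^{6r} ≡ 1 (mod 2·d_r·ℤ_K). -/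
open NumberField

/-- Let `K` be a real quadratic field, `u ∈ ℤ_K^×` a totally
positive unit of norm 1 with `u > 1` under one embedding, and `d_r ∈ ℤ` with
`d_r = 1 + uʳ + u⁻ʳ` in `ℤ_K`. If `d_r` is even then `u^{6r} ≡ 1 (mod 2·d_r·ℤ_K)`. -/
theorem stmt_11 (K : Type*) [Field K] [NumberField K]
    (hdeg : Module.finrank ℚ K = 2) (v : K →+* ℝ)
    (u : (𝓞 K)ˣ) (hu : 1 < v ((u : 𝓞 K) : K))
    (hpos : ∀ w : K →+* ℝ, 0 < w ((u : 𝓞 K) : K))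
    (hnorm : Algebra.norm ℚ (((u : 𝓞 K) : K)) = 1)
    (r : ℕ) (hr : 1 ≤ r) (dr : ℤ)
    (hdr : (dr : 𝓞 K) = 1 + (u : 𝓞 K) ^ r + ((u⁻¹ : (𝓞 K)ˣ) : 𝓞 K) ^ r)
    (heven : Even dr) :
    ((2 * dr : ℤ) : 𝓞 K) ∣ (u : 𝓞 K) ^ (6 * r) - 1 := by
  obtain ⟨k, hk⟩ := heven
  set a : 𝓞 K := (u : 𝓞 K) ^ r with ha
  set b : 𝓞 K := ((u⁻¹ : (𝓞 K)ˣ) : 𝓞 K) ^ r with hb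
  have hab : a * b = 1 := by
    rw [ha, hb, ← mul_pow, ← Units.val_mul, mul_inv_cancel, Units.val_one, one_pow]
  have hdvd : (2 * dr) ∣ (dr ^ 2 - 2 * dr) := ⟨k - 1, by rw [hk]; ring⟩
  have key : (u : 𝓞 K) ^ (6 * r) - 1 = ((dr ^ 2 - 2 * dr : ℤ) : 𝓞 K) * (a ^ 3 * (a - b)) := by
    have h6 : (u : 𝓞 K) ^ (6 * r) = a ^ 6 := by
      rw [ha, ← pow_mul, mul_comm]
    push_cast
    rw [h6, hdr]
    linear_combination (a ^ 2 * b ^ 2 + a * b + 1 + a ^ 3 * b - a ^ 4) * hab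
  rw [key]
  exact dvd_mul_of_dvd_left (map_dvd (Int.castRingHom (𝓞 K)) hdvd) _
end

section
/- Let K be a real quadratic field, u ∈ ℤ_K^× a unit of norm 1 with u > 1, and d_r = 1 + u^r + u^{-r} for r ≥ 1. Then the multiplicative order of u modulo d_r·ℤ_K is exactly 3r. -/
open NumberField

set_option synthInstance.maxHeartbeats 1000000 in
set_option maxHeartbeats 1000000 in
/-- Let `K` be a real quadratic field and `u ∈ ℤ_K^×` the smallest
totally positive unit `> 1` (of norm 1) under the embedding `v`, and
`d_s = 1 + uˢ + u⁻ˢ ∈ ℤ` with `d_r > 3`. Then the multiplicative order of `u`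
modulo `d_r ℤ_K` is exactly `3r`. -/
theorem stmt_12 (K : Type*) [Field K] [NumberField K]
    (hdeg : Module.finrank ℚ K = 2) (v : K →+* ℝ)
    (u : (𝓞 K)ˣ) (hu : 1 < v ((u : 𝓞 K) : K))
    (hpos : ∀ w : K →+* ℝ, 0 < w ((u : 𝓞 K) : K))
    (hnorm : Algebra.norm ℚ (((u : 𝓞 K) : K)) = 1)
    (hmin : ∀ w : (𝓞 K)ˣ, 1 < v ((w : 𝓞 K) : K) →
      (∀ emb : K →+* ℝ, 0 < emb ((w : 𝓞 K) : K)) →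
      v ((u : 𝓞 K) : K) ≤ v ((w : 𝓞 K) : K))
    (d : ℕ → ℤ)
    (hd : ∀ s : ℕ, 1 ≤ s →
      ((d s : ℤ) : 𝓞 K) = 1 + (u : 𝓞 K) ^ s + ((u⁻¹ : (𝓞 K)ˣ) : 𝓞 K) ^ s)
    (r : ℕ) (hr : 1 ≤ r) (hdr3 : 3 < d r) :
    ((d r : ℤ) : 𝓞 K) ∣ (u : 𝓞 K) ^ (3 * r) - 1 ∧
      ∀ q : ℕ, 1 ≤ q → ((d r : ℤ) : 𝓞 K) ∣ (u : 𝓞 K) ^ q - 1 → 3 * r ≤ q := by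
  set a : 𝓞 K := (u : 𝓞 K) with ha
  set b : 𝓞 K := ((u⁻¹ : (𝓞 K)ˣ) : 𝓞 K) with hb
  have hab : a * b = 1 := by rw [ha, hb]; exact_mod_cast u.mul_inv
  set α : ℝ := v ((a : 𝓞 K) : K) with hαdef
  set β : ℝ := v ((b : 𝓞 K) : K) with hβdef
  have hαβ : α * β = 1 := by
    have := congrArg (fun z : 𝓞 K => v (z : K)) hab
    push_cast at this; simpa using this
  have hα : 1 < α := hu
  have hα0 : 0 < α := lt_trans one_pos hα
  have hβ0 : 0 < β := by nlinarith
  have hβ1 : β < 1 := by nlinarith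
  have hdreal : ∀ s : ℕ, 1 ≤ s → ((d s : ℝ)) = 1 + α ^ s + β ^ s := by
    intro s hs
    have := congrArg (fun z : 𝓞 K => v (z : K)) (hd s hs)
    push_cast at this; simpa using this
  -- norm of integer casts
  have hnormint : ∀ n : ℤ, Algebra.norm ℤ ((n : 𝓞 K)) = n ^ 2 := by
    intro n
    rw [show ((n : 𝓞 K)) = algebraMap ℤ (𝓞 K) n by simp,
      Algebra.norm_algebraMap_of_basis (Module.Free.chooseBasis ℤ (𝓞 K)),
      ← Module.finrank_eq_card_chooseBasisIndex, RingOfIntegers.rank, hdeg]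
  -- part 1
  have part1 : ((d r : ℤ) : 𝓞 K) ∣ a ^ (3 * r) - 1 := by
    refine ⟨a ^ r * (a ^ r - 1), ?_⟩
    have habr : a ^ r * b ^ r = 1 := by rw [← mul_pow, hab, one_pow]
    rw [hd r hr, show 3 * r = r * 3 by ring, pow_mul]
    linear_combination (1 - a ^ r) * habr
  -- key size fact
  have main : ∀ g : ℕ, 1 ≤ g → ((d r : ℤ) : 𝓞 K) ∣ a ^ g - 1 → 2 * r < g := by
    intro g hg hdvd
    have habg : a ^ g * b ^ g = 1 := by rw [← mul_pow, hab, one_pow]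
    have hdvdb : ((d r : ℤ) : 𝓞 K) ∣ b ^ g - 1 := by
      have h2 : b ^ g - 1 = (-(b ^ g)) * (a ^ g - 1) := by linear_combination habg
      rw [h2]; exact hdvd.mul_left _
    have hprod : (((d r) ^ 2 : ℤ) : 𝓞 K) ∣ ((3 - d g : ℤ) : 𝓞 K) := by
      have h3 : ((3 - d g : ℤ) : 𝓞 K) = (a ^ g - 1) * (b ^ g - 1) := by
        push_cast
        linear_combination -habg - hd g hg
      rw [h3]
      push_cast
      rw [sq]
      exact mul_dvd_mul hdvd hdvdb
    have hNdvd := map_dvd (Algebra.norm ℤ) hprod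
    rw [hnormint, hnormint] at hNdvd
    -- d g > 3
    have hdg3 : 3 < d g := by
      have hdgr := hdreal g hg
      have h1 : α ^ g * β ^ g = 1 := by rw [← mul_pow, hαβ, one_pow]
      have h2 : 1 < α ^ g := one_lt_pow₀ hα (by omega)
      have h3 : β ^ g < 1 := pow_lt_one₀ hβ0.le hβ1 (by omega)
      have : (3 : ℝ) < (d g : ℝ) := by
        rw [hdgr]
        nlinarith [mul_pos (sub_pos.2 h2) (sub_pos.2 h3)]
      exact_mod_cast this
    -- integer inequality
    have hsq : ((d r) ^ 2) ^ 2 ≤ (3 - d g) ^ 2 := by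
      apply Int.le_of_dvd _ hNdvd
      nlinarith [mul_pos (show (0:ℤ) < d g - 3 by omega) (show (0:ℤ) < d g - 3 by omega)]
    have hineq : (d r) ^ 2 ≤ d g - 3 := by nlinarith
    -- transfer to ℝ and contradict g ≤ 2r
    by_contra hle
    push_neg at hle
    have hrineq : ((d r : ℝ)) ^ 2 ≤ (d g : ℝ) - 3 := by exact_mod_cast hineq
    rw [hdreal r hr, hdreal g hg] at hrineq
    have hαg : α ^ g ≤ (α ^ r) ^ 2 := by
      rw [← pow_mul]
      exact pow_le_pow_right₀ hα.le (by omega)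
    have hβg : β ^ g ≤ 1 := pow_le_one₀ hβ0.le hβ1.le
    have hαr : 1 ≤ α ^ r := one_le_pow₀ hα.le
    have hβr : 0 < β ^ r := pow_pos hβ0 r
    nlinarith
  refine ⟨part1, ?_⟩
  intro q hq hdvdq
  set D : 𝓞 K := ((d r : ℤ) : 𝓞 K) with hD
  set I := Ideal.span {D} with hI
  set x := Ideal.Quotient.mk I a with hx
  have hpow : ∀ m : ℕ, D ∣ a ^ m - 1 ↔ x ^ m = 1 := by
    intro m
    rw [← Ideal.Quotient.eq_zero_iff_dvd, map_sub, map_pow, map_one]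
    exact sub_eq_zero
  have hx3r : x ^ (3 * r) = 1 := (hpow (3 * r)).1 part1
  have hxq : x ^ q = 1 := (hpow q).1 hdvdq
  have hord : orderOf x ∣ Nat.gcd q (3 * r) :=
    Nat.dvd_gcd (orderOf_dvd_of_pow_eq_one hxq) (orderOf_dvd_of_pow_eq_one hx3r)
  set g := Nat.gcd q (3 * r) with hgdef
  have hg1 : 1 ≤ g := Nat.gcd_pos_of_pos_left _ (by omega)
  have hxg : x ^ g = 1 := orderOf_dvd_iff_pow_eq_one.1 hord
  have hdvdg : D ∣ a ^ g - 1 := (hpow g).2 hxg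
  have hg2r : 2 * r < g := main g hg1 hdvdg
  have hg3r : g ∣ 3 * r := Nat.gcd_dvd_right _ _
  have hgeq : g = 3 * r := by
    obtain ⟨k, hk⟩ := hg3r
    rcases k with _ | _ | k
    · omega
    · omega
    · have h2g : g * 2 ≤ g * (k + 1 + 1) := Nat.mul_le_mul_left _ (by omega)
      rw [← hk] at h2g
      omega
  have : 3 * r ∣ q := hgeq ▸ Nat.gcd_dvd_left _ _
  exact Nat.le_of_dvd (by omega) this
end

section
/- Let K be a real quadratic field, u ∈ ℤ_K^× of norm 1 with u > 1, and d_r = 1 + u^r + u^{-r}. If d_r is even, then the multiplicative order of u modulo 2d_r·ℤ_K is exactly 6r. -/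
open NumberField

lemma my_descent {K : Type*} [Field K] [NumberField K]
    (hdeg : Module.finrank ℚ K = 2) {a b : ℤ}
    (h : ((a : ℤ) : 𝓞 K) ∣ ((b : ℤ) : 𝓞 K)) : a ∣ b := by
  have h2 : Module.finrank ℤ (𝓞 K) = 2 := (RingOfIntegers.rank K).trans hdeg
  have hn := map_dvd (Algebra.norm ℤ (S := 𝓞 K)) h
  let bs := Module.Free.chooseBasis ℤ (𝓞 K)
  have hcard : Fintype.card (Module.Free.ChooseBasisIndex ℤ (𝓞 K)) = 2 := by
    rw [← Module.finrank_eq_card_chooseBasisIndex]; exact h2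
  rw [show ((a:𝓞 K)) = algebraMap ℤ (𝓞 K) a by simp,
    show ((b:𝓞 K)) = algebraMap ℤ (𝓞 K) b by simp,
    Algebra.norm_algebraMap_of_basis bs, Algebra.norm_algebraMap_of_basis bs, hcard] at hn
  exact (Int.pow_dvd_pow_iff (by norm_num)).mp hn

set_option maxHeartbeats 1000000 in
set_option synthInstance.maxHeartbeats 1000000 in

/-- Let `K` be a real quadratic field and `u ∈ ℤ_K^×` the smallest
totally positive unit `> 1` (of norm 1) under the embedding `v`, and
`d_s = 1 + uˢ + u⁻ˢ ∈ ℤ` with `d_r > 3`. Then the multiplicative order of `u`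
modulo `2·d_r·ℤ_K` is exactly `6r` (assuming `d_r` even). -/
theorem stmt_13 (K : Type*) [Field K] [NumberField K]
    (hdeg : Module.finrank ℚ K = 2) (v : K →+* ℝ)
    (u : (𝓞 K)ˣ) (hu : 1 < v ((u : 𝓞 K) : K))
    (hpos : ∀ w : K →+* ℝ, 0 < w ((u : 𝓞 K) : K))
    (hnorm : Algebra.norm ℚ (((u : 𝓞 K) : K)) = 1)
    (hmin : ∀ w : (𝓞 K)ˣ, 1 < v ((w : 𝓞 K) : K) →
      (∀ emb : K →+* ℝ, 0 < emb ((w : 𝓞 K) : K)) →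
      v ((u : 𝓞 K) : K) ≤ v ((w : 𝓞 K) : K))
    (d : ℕ → ℤ)
    (hd : ∀ s : ℕ, 1 ≤ s →
      ((d s : ℤ) : 𝓞 K) = 1 + (u : 𝓞 K) ^ s + ((u⁻¹ : (𝓞 K)ˣ) : 𝓞 K) ^ s)
    (r : ℕ) (hr : 1 ≤ r) (hdr3 : 3 < d r) (heven : Even (d r)) :
    ((2 * d r : ℤ) : 𝓞 K) ∣ (u : 𝓞 K) ^ (6 * r) - 1 ∧
      ∀ q : ℕ, 1 ≤ q → ((2 * d r : ℤ) : 𝓞 K) ∣ (u : 𝓞 K) ^ q - 1 → 6 * r ≤ q := by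
  have hinj : Function.Injective (algebraMap (𝓞 K) K) := RingOfIntegers.coe_injective
  have hαβ : (u : 𝓞 K) * ((u⁻¹ : (𝓞 K)ˣ) : 𝓞 K) = 1 := by
    exact_mod_cast u.mul_inv
  have hxy : ((u : 𝓞 K) : K) * (((u⁻¹ : (𝓞 K)ˣ) : 𝓞 K) : K) = 1 := by
    exact_mod_cast congrArg (algebraMap (𝓞 K) K) hαβ
  have hx0 : ((u : 𝓞 K) : K) ≠ 0 := left_ne_zero_of_mul_eq_one hxy
  have hyinv : ∀ s : ℕ, (((u⁻¹ : (𝓞 K)ˣ) : 𝓞 K) : K) ^ s = (((u : 𝓞 K) : K) ^ s)⁻¹ := by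
    intro s
    refine eq_inv_of_mul_eq_one_left ?_
    rw [← mul_pow, mul_comm, hxy, one_pow]
  have hdK : ∀ s : ℕ, 1 ≤ s → ((d s : ℤ) : K) =
      1 + ((u : 𝓞 K) : K) ^ s + ((((u : 𝓞 K) : K)) ^ s)⁻¹ := by
    intro s hs
    have := congrArg (algebraMap (𝓞 K) K) (hd s hs)
    rw [map_intCast] at this
    push_cast at this
    rw [this, hyinv]
  have hX0 : ∀ s : ℕ, ((u : 𝓞 K) : K) ^ s ≠ 0 := fun s => pow_ne_zero _ hx0
  -- key polynomial identities
  have I2 : (u : 𝓞 K) ^ (3*r) - (1 - ((d r : ℤ) : 𝓞 K)) =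
      ((d r * (d r - 2) : ℤ) : 𝓞 K) * (u : 𝓞 K) ^ r := by
    apply hinj
    push_cast [map_intCast, map_ofNat]
    rw [hdK r hr, pow_mul']
    field_simp
    ring
  have I1 : (u : 𝓞 K) ^ (6*r) - 1 =
      ((d r * (d r - 2) : ℤ) : 𝓞 K) *
        ((((d r - 2 : ℤ)) : 𝓞 K) * (u : 𝓞 K) ^ r - 1) *
        ((((d r : ℤ)) : 𝓞 K) * (u : 𝓞 K) ^ r - 1) := by
    apply hinj
    push_cast [map_intCast, map_ofNat]
    rw [hdK r hr, pow_mul']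
    field_simp
    ring
  -- integer divisibilities
  obtain ⟨c, hc⟩ := heven
  have hZdvd : 2 * d r ∣ d r * (d r - 2) := ⟨c - 1, by rw [hc]; ring⟩
  have hZsq : 2 * d r ∣ d r * d r := ⟨c, by rw [hc]; ring⟩
  set T : 𝓞 K := ((2 * d r : ℤ) : 𝓞 K) with hT
  have hTD2 : T ∣ ((d r * (d r - 2) : ℤ) : 𝓞 K) := by rw [hT]; exact map_dvd (Int.castRingHom (𝓞 K)) hZdvd
  have hTsq : T ∣ ((d r : ℤ) : 𝓞 K) * ((d r : ℤ) : 𝓞 K) := by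
    have : T ∣ ((d r * d r : ℤ) : 𝓞 K) := by rw [hT]; exact map_dvd (Int.castRingHom (𝓞 K)) hZsq
    push_cast at this
    exact this
  -- part 1
  have part1 : T ∣ (u : 𝓞 K) ^ (6 * r) - 1 := by
    rw [I1]
    exact (hTD2.mul_right _).mul_right _
  refine ⟨part1, ?_⟩
  intro q hq hqdvd
  -- quotient ring and order of u
  let I : Ideal (𝓞 K) := Ideal.span {T}
  let π : 𝓞 K →+* (𝓞 K ⧸ I) := Ideal.Quotient.mk I
  let w : ((𝓞 K) ⧸ I)ˣ := Units.map π.toMonoidHom u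
  have hw2 : ∀ a b : ℕ, w ^ a = w ^ b ↔ T ∣ (u : 𝓞 K) ^ a - (u : 𝓞 K) ^ b := by
    intro a b
    rw [Units.ext_iff, Units.val_pow_eq_pow_val, Units.val_pow_eq_pow_val]
    show π (u : 𝓞 K) ^ a = π (u : 𝓞 K) ^ b ↔ _
    rw [← map_pow, ← map_pow, ← sub_eq_zero, ← map_sub,
      Ideal.Quotient.eq_zero_iff_mem, Ideal.mem_span_singleton]
  have hw1 : ∀ n : ℕ, w ^ n = 1 ↔ T ∣ (u : 𝓞 K) ^ n - 1 := by
    intro n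
    have := hw2 n 0
    rwa [pow_zero, pow_zero] at this
  have h6 : w ^ (6 * r) = 1 := (hw1 _).mpr part1
  have hfin : IsOfFinOrder w := isOfFinOrder_iff_pow_eq_one.mpr ⟨6 * r, by omega, h6⟩
  have hepos : 0 < orderOf w := hfin.orderOf_pos
  have he6 : orderOf w ∣ 6 * r := orderOf_dvd_of_pow_eq_one h6
  have heq : orderOf w ∣ q := orderOf_dvd_of_pow_eq_one ((hw1 q).mpr hqdvd)
  -- real estimates helper
  have hdR : ∀ s : ℕ, 1 ≤ s → ((d s : ℤ) : ℝ) =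
      1 + (v ((u : 𝓞 K) : K)) ^ s + ((v ((u : 𝓞 K) : K)) ^ s)⁻¹ := by
    intro s hs
    have := congrArg v (hdK s hs)
    rw [map_intCast] at this
    rw [this]
    push_cast [map_add, map_one, map_pow, map_inv₀]
    ring
  by_cases h3 : orderOf w ∣ 3 * r
  · -- then u^{3r} ≡ 1, contradiction
    exfalso
    have hA : T ∣ (u : 𝓞 K) ^ (3 * r) - 1 := (hw1 _).mp (orderOf_dvd_iff_pow_eq_one.mp h3)
    have hDc : T ∣ ((d r : ℤ) : 𝓞 K) := by
      have e1 : ((d r : ℤ) : 𝓞 K) =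
          ((d r * (d r - 2) : ℤ) : 𝓞 K) * (u : 𝓞 K) ^ r - ((u : 𝓞 K) ^ (3 * r) - 1) := by
        linear_combination I2
      rw [e1]
      exact dvd_sub (hTD2.mul_right _) hA
    have : 2 * d r ∣ d r := my_descent hdeg hDc
    have := Int.le_of_dvd (by linarith) this
    linarith
  · set k := 6 * r / orderOf w with hkdef
    have hek : orderOf w * k = 6 * r := Nat.mul_div_cancel' he6
    rcases Nat.even_or_odd k with hke | hko
    · exfalso
      obtain ⟨k', hk'⟩ := hke
      have h2' : 2 * (orderOf w * k') = 2 * (3 * r) := by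
        rw [show 2 * (orderOf w * k') = orderOf w * (k' + k') by ring, ← hk', hek]; ring
      exact h3 ⟨k', (Nat.eq_of_mul_eq_mul_left (by norm_num) h2').symm⟩
    · obtain ⟨j, hj⟩ := hko
      by_cases hj0 : j = 0
      · -- k = 1, so orderOf w = 6r and we win
        have hk1 : k = 1 := by omega
        rw [hk1, mul_one] at hek
        calc 6 * r = orderOf w := hek.symm
          _ ≤ q := Nat.le_of_dvd (by omega) heq
      · exfalso
        have hk3 : 3 ≤ k := by omega
        have heeven : Even (orderOf w) := by
          have h6e : Even (orderOf w * k) := by rw [hek]; exact ⟨3 * r, by ring⟩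
          rcases Nat.even_mul.mp h6e with h | h
          · exact h
          · exact absurd h (by simp [hj, Nat.even_iff, Nat.add_mul_mod_self_left])
        obtain ⟨m, hm⟩ := heeven
        have hm1 : 1 ≤ m := by omega
        have hmk : m * k = 3 * r := by
          have : 2 * (m * k) = 2 * (3 * r) := by
            calc 2 * (m * k) = (m + m) * k := by ring
              _ = orderOf w * k := by rw [hm]
              _ = 6 * r := hek
              _ = 2 * (3 * r) := by ring
          exact Nat.eq_of_mul_eq_mul_left (by norm_num) this
        have hmr : m ≤ r := by
          have h' : m * 3 ≤ 3 * r := hmk ▸ Nat.mul_le_mul_left m hk3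
          omega
        -- w^{3r} = w^m
        have h3m : w ^ (3 * r) = w ^ m := by
          have hdec : 3 * r = m + orderOf w * j := by
            calc 3 * r = m * k := hmk.symm
              _ = m * (2 * j + 1) := by rw [hj]
              _ = m + (m + m) * j := by ring
              _ = m + orderOf w * j := by rw [hm]
          rw [hdec, pow_add, pow_mul, pow_orderOf_eq_one, one_pow, mul_one]
        have hdm : T ∣ (u : 𝓞 K) ^ (3 * r) - (u : 𝓞 K) ^ m := (hw2 _ _).mp h3m
        -- T ∣ α^m - (1 - D)
        have h1 : T ∣ (u : 𝓞 K) ^ m - (1 - ((d r : ℤ) : 𝓞 K)) := by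
          have e1 : (u : 𝓞 K) ^ m - (1 - ((d r : ℤ) : 𝓞 K)) =
              ((d r * (d r - 2) : ℤ) : 𝓞 K) * (u : 𝓞 K) ^ r -
                ((u : 𝓞 K) ^ (3 * r) - (u : 𝓞 K) ^ m) := by
            linear_combination I2
          rw [e1]
          exact dvd_sub (hTD2.mul_right _) hdm
        -- T ∣ β^m - (1 + D)
        have hm' : (u : 𝓞 K) ^ m * ((u⁻¹ : (𝓞 K)ˣ) : 𝓞 K) ^ m = 1 := by
          rw [← mul_pow, hαβ, one_pow]
        have h2 : T ∣ ((u⁻¹ : (𝓞 K)ˣ) : 𝓞 K) ^ m - (1 + ((d r : ℤ) : 𝓞 K)) := by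
          have e2 : ((u⁻¹ : (𝓞 K)ˣ) : 𝓞 K) ^ m - (1 + ((d r : ℤ) : 𝓞 K)) =
              ((d r : ℤ) : 𝓞 K) * ((d r : ℤ) : 𝓞 K) * ((u⁻¹ : (𝓞 K)ˣ) : 𝓞 K) ^ m -
                (1 + ((d r : ℤ) : 𝓞 K)) * ((u⁻¹ : (𝓞 K)ˣ) : 𝓞 K) ^ m *
                  ((u : 𝓞 K) ^ m - (1 - ((d r : ℤ) : 𝓞 K))) := by
            linear_combination (1 + ((d r : ℤ) : 𝓞 K)) * hm'
          rw [e2]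
          exact dvd_sub (hTsq.mul_right _) (h1.mul_left _)
        -- T ∣ d_m - 3
        have h4 : T ∣ ((d m - 3 : ℤ) : 𝓞 K) := by
          have e3 : ((d m - 3 : ℤ) : 𝓞 K) =
              ((u : 𝓞 K) ^ m - (1 - ((d r : ℤ) : 𝓞 K))) +
                (((u⁻¹ : (𝓞 K)ˣ) : 𝓞 K) ^ m - (1 + ((d r : ℤ) : 𝓞 K))) := by
            have e4 := hd m hm1
            push_cast
            linear_combination e4
          rw [e3]
          exact dvd_add h1 h2
        have hZ2 : 2 * d r ∣ d m - 3 := my_descent hdeg h4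
        -- size contradiction
        have ha1 : (1:ℝ) < v ((u : 𝓞 K) : K) := hu
        have hAm : (1:ℝ) < (v ((u : 𝓞 K) : K)) ^ m := one_lt_pow₀ ha1 (by omega)
        have hBr : (1:ℝ) < (v ((u : 𝓞 K) : K)) ^ r := one_lt_pow₀ ha1 (by omega)
        have hdm3 : 3 < d m := by
          have : (3:ℝ) < ((d m : ℤ) : ℝ) := by
            rw [hdR m hm1]
            have h0 : (0:ℝ) < (v ((u : 𝓞 K) : K)) ^ m := by linarith
            have hAi : (v ((u : 𝓞 K) : K)) ^ m * ((v ((u : 𝓞 K) : K)) ^ m)⁻¹ = 1 :=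
              mul_inv_cancel₀ (by linarith)
            nlinarith [mul_pos (sub_pos.mpr hAm) (sub_pos.mpr hAm)]
          exact_mod_cast this
        have hdmr : d m ≤ d r := by
          have : ((d m : ℤ) : ℝ) ≤ ((d r : ℤ) : ℝ) := by
            rw [hdR m hm1, hdR r hr]
            set A := (v ((u : 𝓞 K) : K)) ^ m with hA
            set B := (v ((u : 𝓞 K) : K)) ^ r with hB
            have hAB : A ≤ B := pow_le_pow_right₀ (le_of_lt ha1) hmr
            have hA0 : (0:ℝ) < A := by linarith
            have hB0 : (0:ℝ) < B := by linarith
            have h : B + B⁻¹ - (A + A⁻¹) = (B - A) * (A * B - 1) / (A * B) := by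
              field_simp
              ring
            have hnn : 0 ≤ B + B⁻¹ - (A + A⁻¹) := by
              rw [h]
              apply div_nonneg
              · apply mul_nonneg (by linarith)
                nlinarith
              · positivity
            linarith
          exact_mod_cast this
        have := Int.le_of_dvd (by omega) hZ2
        omega
end

section
/- Let K be a real quadratic field, u ∈ ℤ_K^× the smallest totally positive power of the fundamental unit (norm 1, u > 1), and d_r = 1 + u^r + u^{-r}. If q ≥ 1 satisfies u^q ≡ 1 (mod d_r ℤ_K), then d_r divides d_q - 3 and hence q > r. -/
open NumberField

lemma int_dvd_of_ok_dvd {K : Type*} [Field K] [NumberField K] {a b : ℤ}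
    (h : ((a : ℤ) : 𝓞 K) ∣ ((b : ℤ) : 𝓞 K)) : a ∣ b := by
  rcases h with ⟨c, hc⟩
  rcases eq_or_ne a 0 with rfl | ha
  · simp only [Int.cast_zero, zero_mul] at hc
    have : (b : ℤ) = 0 := by exact_mod_cast hc
    simp [this]
  · have hK : ((b : K)) = (a : K) * ((c : 𝓞 K) : K) := by
      have := congrArg (fun x : 𝓞 K => (x : K)) hc
      push_cast at this
      exact this
    have haQ : (a : ℚ) ≠ 0 := by exact_mod_cast ha
    have hx : algebraMap ℚ K ((b : ℚ) / (a : ℚ)) = ((c : 𝓞 K) : K) := by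
      have haK : (a : K) ≠ 0 := by exact_mod_cast ha
      rw [map_div₀]
      field_simp
      rw [map_intCast, map_intCast, div_eq_iff haK, hK]; ring
    have hint : IsIntegral ℤ ((b : ℚ) / (a : ℚ)) := by
      have hcint : IsIntegral ℤ ((c : 𝓞 K) : K) := (c : 𝓞 K).2
      rw [← hx] at hcint
      exact (isIntegral_algebraMap_iff (algebraMap ℚ K).injective).mp hcint
    obtain ⟨n, hn⟩ := IsIntegrallyClosed.isIntegral_iff.mp hint
    refine ⟨n, ?_⟩
    have : (b : ℚ) = (a : ℚ) * n := by
      have hn' : (n : ℚ) = (b : ℚ) / (a : ℚ) := by exact_mod_cast hn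
      rw [hn']; field_simp
    exact_mod_cast this


/-- Let `K` be a real quadratic field and `u ∈ ℤ_K^×` the smallest
totally positive unit `> 1` (of norm 1) under the embedding `v`, and
`d_s = 1 + uˢ + u⁻ˢ ∈ ℤ` with `d_r > 3`. If `q ≥ 1` satisfies
`u^q ≡ 1 (mod d_r ℤ_K)`, then `d_r ∣ d_q - 3` and hence `q > r`. -/
theorem stmt_14 (K : Type*) [Field K] [NumberField K]
    (hdeg : Module.finrank ℚ K = 2) (v : K →+* ℝ)
    (u : (𝓞 K)ˣ) (hu : 1 < v ((u : 𝓞 K) : K))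
    (hpos : ∀ w : K →+* ℝ, 0 < w ((u : 𝓞 K) : K))
    (hnorm : Algebra.norm ℚ (((u : 𝓞 K) : K)) = 1)
    (hmin : ∀ w : (𝓞 K)ˣ, 1 < v ((w : 𝓞 K) : K) →
      (∀ emb : K →+* ℝ, 0 < emb ((w : 𝓞 K) : K)) →
      v ((u : 𝓞 K) : K) ≤ v ((w : 𝓞 K) : K))
    (d : ℕ → ℤ)
    (hd : ∀ s : ℕ, 1 ≤ s →
      ((d s : ℤ) : 𝓞 K) = 1 + (u : 𝓞 K) ^ s + ((u⁻¹ : (𝓞 K)ˣ) : 𝓞 K) ^ s)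
    (r : ℕ) (hr : 1 ≤ r) (hdr3 : 3 < d r)
    (q : ℕ) (hq : 1 ≤ q) (hdvd : ((d r : ℤ) : 𝓞 K) ∣ (u : 𝓞 K) ^ q - 1) :
    d r ∣ d q - 3 ∧ r < q := by
  -- abbreviations
  set A : 𝓞 K := (u : 𝓞 K) with hA
  set B : 𝓞 K := ((u⁻¹ : (𝓞 K)ˣ) : 𝓞 K) with hB
  have hBA : B * A = 1 := u.inv_mul
  -- divisibility
  have hdvdO : ((d r : ℤ) : 𝓞 K) ∣ ((d q - 3 : ℤ) : 𝓞 K) := by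
    have h1 : ((d q - 3 : ℤ) : 𝓞 K) = (1 - B ^ q) * (A ^ q - 1) := by
      push_cast
      rw [hd q hq]
      have hba : B ^ q * A ^ q = 1 := by rw [← mul_pow, hBA, one_pow]
      linear_combination hba
    rw [h1]
    exact Dvd.dvd.mul_left hdvd _
  have hdvdZ : d r ∣ d q - 3 := int_dvd_of_ok_dvd hdvdO
  refine ⟨hdvdZ, ?_⟩
  -- real values
  set t : ℝ := v ((A : 𝓞 K) : K) with ht
  set t' : ℝ := v ((B : 𝓞 K) : K) with ht'
  have htt' : t * t' = 1 := by
    rw [ht, ht', ← map_mul]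
    have : ((A : 𝓞 K) : K) * ((B : 𝓞 K) : K) = 1 := by
      have := u.mul_inv
      exact_mod_cast congrArg (fun x : 𝓞 K => (x : K)) this
    rw [this, map_one]
  have ht1 : 1 < t := hu
  have ht0 : 0 < t := by linarith
  have hreal : ∀ s : ℕ, 1 ≤ s → (d s : ℝ) = 1 + t ^ s + t' ^ s := by
    intro s hs
    have := congrArg (fun x : 𝓞 K => v (x : K)) (hd s hs)
    simpa [map_add, map_pow, map_one] using this
  have hinv : ∀ s : ℕ, t' ^ s = (t ^ s)⁻¹ := by
    intro s
    have : t ^ s * t' ^ s = 1 := by rw [← mul_pow, htt', one_pow]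
    field_simp
    linarith [this]
  -- d m > 3 for m ≥ 1
  have hgt3 : (3 : ℝ) < (d q : ℝ) := by
    rw [hreal q hq, hinv q]
    have hx : 1 < t ^ q := one_lt_pow₀ ht1 (by omega)
    have hx0 : 0 < t ^ q := by linarith
    have key : t ^ q + (t ^ q)⁻¹ - 2 = (t ^ q - 1) ^ 2 * (t ^ q)⁻¹ := by
      field_simp; ring
    have h1 : 0 < (t ^ q - 1) ^ 2 := by nlinarith
    have h2 : 0 < (t ^ q)⁻¹ := inv_pos.mpr hx0
    nlinarith
  have hdq3 : 3 < d q := by exact_mod_cast hgt3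
  -- monotonicity
  by_contra hle
  push_neg at hle
  have hmono : (d q : ℝ) ≤ (d r : ℝ) := by
    rw [hreal q hq, hreal r hr, hinv q, hinv r]
    have hxy : t ^ q ≤ t ^ r := pow_le_pow_right₀ (le_of_lt ht1) hle
    have hx1 : 1 ≤ t ^ q := one_le_pow₀ (le_of_lt ht1)
    have hx0 : 0 < t ^ q := by linarith
    have hy0 : 0 < t ^ r := by linarith
    have : t ^ q + (t ^ q)⁻¹ ≤ t ^ r + (t ^ r)⁻¹ := by
      rw [← sub_nonneg]
      have h1 : (t ^ q)⁻¹ - (t ^ r)⁻¹ = (t ^ r - t ^ q) / (t ^ q * t ^ r) := by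
        field_simp
      have h2 : (t ^ r - t ^ q) / (t ^ q * t ^ r) ≤ t ^ r - t ^ q := by
        rw [div_le_iff₀ (by positivity)]
        have hxy' : (0:ℝ) ≤ t ^ r - t ^ q := by linarith
        have hprod : (1:ℝ) ≤ t ^ q * t ^ r := by nlinarith
        nlinarith [mul_le_mul_of_nonneg_left hprod hxy']
      nlinarith
    linarith
  have hdqdr : d q ≤ d r := by exact_mod_cast hmono
  have hpos' : 0 < d q - 3 := by omega
  have := Int.le_of_dvd hpos' hdvdZ
  omega
end
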